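/- Let Q be a conjunctive query over a finite variable set V with body atoms u_1,…,u_m and FD set Φ, and let s ≥ 0 be a real number such that every Shannon-feasible function h for (Q,Φ) satisfies h(vars(u_0)) ≤ s. Then every valid coloring ℒ of (V,Φ) satisfies |ℒ(vars(u_0))| ≤ s · max_{1≤j≤m} |ℒ(vars(u_j))|; that is, the color number of Q is at most the value of the Shannon linear program. -/

import Mathlib

/-- Let `Q` be a conjunctive query with body atoms `u 1, …, u m` and FD set
`Φ`, and let `s` be a real number such that every Shannon-feasible function `h` for `(Q, Φ)`
satisfies `h(vars(u0)) ≤ s`.  Then every valid coloring `ℒ` of `(V, Φ)` satisfies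
`|ℒ(vars(u0))| ≤ s * max_j |ℒ(vars(u j))|`; that is, the color number of `Q` is at most the
value of the Shannon linear program. -/
theorem color_number_le_shannon_LP
    {V : Type} [Fintype V] [DecidableEq V]
    {m : ℕ} (hm : 1 ≤ m)
    {a0 : ℕ} (u0 : Fin a0 → V)
    (a : Fin m → ℕ) (u : (j : Fin m) → Fin (a j) → V)
    (Φ : Set (Finset V × V))
    (s : ℝ)
    (hLP : ∀ h : Finset V → ℝ,
      h ∅ = 0 →
      (∀ j : Fin m, h (Finset.univ.image (u j)) ≤ 1) →
      (∀ p ∈ Φ, h (insert p.2 p.1) = h p.1) →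
      (∀ x : V, 0 ≤ h Finset.univ - h (({x} : Finset V)ᶜ)) →
      (∀ x y : V, x ≠ y → ∀ S : Finset V, S ⊆ ({x, y} : Finset V)ᶜ →
        0 ≤ h (insert x S) + h (insert y S) - h S - h (insert x (insert y S))) →
      h (Finset.univ.image u0) ≤ s)
    {C : Type} [DecidableEq C] (ℒ : V → Finset C)
    (hvalid : ∀ p ∈ Φ, ℒ p.2 ⊆ p.1.biUnion ℒ) :
    ((((Finset.univ.image u0).biUnion ℒ).card : ℕ) : ℝ) ≤
      s * ((Finset.univ.sup
        (fun j => ((Finset.univ.image (u j)).biUnion ℒ).card) : ℕ) : ℝ) := by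
  classical
  set M : ℕ := Finset.univ.sup
      (fun j => ((Finset.univ.image (u j)).biUnion ℒ).card) with hMdef
  set c : ℕ := ((Finset.univ.image u0).biUnion ℒ).card with hcdef
  have key : ∀ t : ℝ, 0 ≤ t →
      (∀ j : Fin m, t * (((Finset.univ.image (u j)).biUnion ℒ).card : ℝ) ≤ 1) →
      t * (c : ℝ) ≤ s := by
    intro t ht hbody
    refine hLP (fun S => t * ((S.biUnion ℒ).card : ℝ)) ?_ hbody ?_ ?_ ?_
    · simp
    · intro p hp
      have heq : (insert p.2 p.1).biUnion ℒ = p.1.biUnion ℒ := by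
        rw [Finset.biUnion_insert, Finset.union_eq_right]
        exact hvalid p hp
      simp [heq]
    · intro x
      have hsub : (({x} : Finset V)ᶜ).biUnion ℒ ⊆ (Finset.univ : Finset V).biUnion ℒ :=
        Finset.biUnion_subset_biUnion_of_subset_left _ (Finset.subset_univ _)
      have h1 := Finset.card_le_card hsub
      have h2 : ((((({x} : Finset V)ᶜ).biUnion ℒ).card : ℝ))
          ≤ (((Finset.univ : Finset V).biUnion ℒ).card : ℝ) := by exact_mod_cast h1
      nlinarith
    · intro x y hxy S hS
      set T : Finset C := S.biUnion ℒ with hT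
      have hx : (insert x S).biUnion ℒ = ℒ x ∪ T := Finset.biUnion_insert
      have hy : (insert y S).biUnion ℒ = ℒ y ∪ T := Finset.biUnion_insert
      have hxy2 : (insert x (insert y S)).biUnion ℒ = ℒ x ∪ (ℒ y ∪ T) := by
        rw [Finset.biUnion_insert, Finset.biUnion_insert]
      have hun : (ℒ x ∪ T) ∪ (ℒ y ∪ T) = ℒ x ∪ (ℒ y ∪ T) := by
        ext z; simp; tauto
      have hcard := Finset.card_union_add_card_inter (ℒ x ∪ T) (ℒ y ∪ T)
      have hTsub : T ⊆ (ℒ x ∪ T) ∩ (ℒ y ∪ T) := by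
        intro z hz; simp [Finset.mem_inter, Finset.mem_union] at *; tauto
      have hTcard := Finset.card_le_card hTsub
      have hnat : T.card + (ℒ x ∪ (ℒ y ∪ T)).card
          ≤ (ℒ x ∪ T).card + (ℒ y ∪ T).card := by
        rw [← hun]; omega
      have hreal : (T.card : ℝ) + ((ℒ x ∪ (ℒ y ∪ T)).card : ℝ)
          ≤ ((ℒ x ∪ T).card : ℝ) + ((ℒ y ∪ T).card : ℝ) := by exact_mod_cast hnat
      simp only [hx, hy, hxy2]
      nlinarith
  have hs : 0 ≤ s := by
    have := key 0 le_rfl (by intro j; simp)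
    simpa using this
  rcases Nat.eq_zero_or_pos M with h0 | hpos
  · -- all body atoms have empty coloring
    have hall : ∀ j : Fin m, ((Finset.univ.image (u j)).biUnion ℒ).card = 0 := by
      intro j
      have hle : ((Finset.univ.image (u j)).biUnion ℒ).card ≤ M :=
        Finset.le_sup (f := fun j => ((Finset.univ.image (u j)).biUnion ℒ).card)
          (Finset.mem_univ j)
      omega
    have hc : ∀ t : ℝ, 0 ≤ t → t * (c : ℝ) ≤ s := by
      intro t ht
      exact key t ht (by intro j; simp [hall j])
    have hc0 : c = 0 := by
      by_contra hne
      have hcpos : (0 : ℝ) < (c : ℝ) := by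
        exact_mod_cast Nat.pos_of_ne_zero hne
      have ht : (0 : ℝ) ≤ (s + 1) / (c : ℝ) := by positivity
      have := hc ((s + 1) / (c : ℝ)) ht
      rw [div_mul_cancel₀ _ (ne_of_gt hcpos)] at this
      linarith
    rw [h0, hc0]
    simp
  · have hMpos : (0 : ℝ) < (M : ℝ) := by exact_mod_cast hpos
    have ht : (0 : ℝ) ≤ 1 / (M : ℝ) := by positivity
    have hbody : ∀ j : Fin m,
        (1 / (M : ℝ)) * (((Finset.univ.image (u j)).biUnion ℒ).card : ℝ) ≤ 1 := by
      intro j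
      have hle : ((Finset.univ.image (u j)).biUnion ℒ).card ≤ M :=
        Finset.le_sup (f := fun j => ((Finset.univ.image (u j)).biUnion ℒ).card)
          (Finset.mem_univ j)
      have : (((Finset.univ.image (u j)).biUnion ℒ).card : ℝ) ≤ (M : ℝ) := by
        exact_mod_cast hle
      rw [div_mul_eq_mul_div, one_mul, div_le_one hMpos]
      exact this
    have := key (1 / (M : ℝ)) ht hbody
    rw [div_mul_eq_mul_div, one_mul, div_le_iff₀ hMpos] at this
    linarith
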